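/- For all real λ > 0, β > 0, t ≥ 0, every integer n ≥ 1 and every real v > -λ, ∫₀^∞ e^{-v s} · λ e^{-β t - λ s} Σ_{k=1}^{n} (β t)^{k-1} Φ(n, k, λ s (β t)^n) ds = e^{-β t} · (λ/(λ + v)) · Σ_{k=1}^{n} (β t)^{k-1} E_{n,k}(λ (β t)^n/(λ + v)). -/

import Mathlib

open Real MeasureTheory Filter Finset

/-- Wright function `Φ(ρ, δ, z) = Σ_{j≥0} z^j / (j! Γ(ρ j + δ))`. -/
noncomputable def wright (ρ δ z : ℝ) : ℝ :=
  ∑' j : ℕ, z ^ j / ((Nat.factorial j : ℝ) * Real.Gamma (ρ * (j : ℝ) + δ))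

/-- Wright function with second parameter 0:
`Φ(ρ, 0, z) = Σ_{j≥1} z^j / (j! Γ(ρ j))`. -/
noncomputable def wright0 (ρ z : ℝ) : ℝ :=
  ∑' j : ℕ, z ^ (j + 1) /
    ((Nat.factorial (j + 1) : ℝ) * Real.Gamma (ρ * ((j : ℝ) + 1)))

/-- Two-parameter Mittag-Leffler function `E_{ρ,δ}(z) = Σ_{j≥0} z^j / Γ(ρ j + δ)`. -/
noncomputable def ml2 (ρ δ z : ℝ) : ℝ :=
  ∑' j : ℕ, z ^ j / Real.Gamma (ρ * (j : ℝ) + δ)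

/-- Three-parameter generalized Mittag-Leffler function
`E^γ_{ρ,δ}(z) = Σ_{j≥0} (Γ(γ+j)/Γ(γ)) z^j / (j! Γ(ρ j + δ))`. -/
noncomputable def ml3 (γ ρ δ z : ℝ) : ℝ :=
  ∑' j : ℕ, (Real.Gamma (γ + (j : ℝ)) / Real.Gamma γ) * z ^ j /
    ((Nat.factorial j : ℝ) * Real.Gamma (ρ * (j : ℝ) + δ))

/-- Modified Bessel function of the first kind of order 0:
`I₀(z) = Σ_{j≥0} (z/2)^{2j} / (j!)²`. -/
noncomputable def besselI0 (z : ℝ) : ℝ :=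
  ∑' j : ℕ, (z / 2) ^ (2 * j) / ((Nat.factorial j : ℝ) * (Nat.factorial j : ℝ))

section Aux

open Set

lemma gamma_eq (n k j : ℕ) (hk : 1 ≤ k) :
    Real.Gamma ((n:ℝ) * (j:ℝ) + (k:ℝ)) = ((n*j+k-1).factorial : ℝ) := by
  have h1 : 1 ≤ n*j+k := by omega
  have h2 : ((n:ℝ) * (j:ℝ) + (k:ℝ)) = ((n*j+k-1 : ℕ):ℝ) + 1 := by
    rw [Nat.cast_sub h1]; push_cast; ring
  rw [h2, Real.Gamma_nat_eq_factorial]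

lemma gamma_pos (n k j : ℕ) (hk : 1 ≤ k) :
    0 < Real.Gamma ((n:ℝ) * (j:ℝ) + (k:ℝ)) := by
  rw [gamma_eq n k j hk]; exact_mod_cast Nat.factorial_pos _

lemma fact_le_gamma (n k j : ℕ) (hn : 1 ≤ n) (hk : 1 ≤ k) :
    (j.factorial : ℝ) ≤ Real.Gamma ((n:ℝ) * (j:ℝ) + (k:ℝ)) := by
  rw [gamma_eq n k j hk]
  have : j ≤ n*j := Nat.le_mul_of_pos_left j hn
  exact_mod_cast Nat.factorial_le (by omega)

lemma one_le_gamma (n k j : ℕ) (hk : 1 ≤ k) :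
    (1:ℝ) ≤ Real.Gamma ((n:ℝ) * (j:ℝ) + (k:ℝ)) := by
  rw [gamma_eq n k j hk]; exact_mod_cast Nat.one_le_iff_ne_zero.mpr (Nat.factorial_pos _).ne'

lemma wright_summable (n k : ℕ) (hk : 1 ≤ k) (x : ℝ) :
    Summable (fun j : ℕ => x ^ j / ((j.factorial : ℝ) * Real.Gamma ((n:ℝ) * (j:ℝ) + (k:ℝ)))) := by
  refine Summable.of_norm_bounded (g := fun j => |x| ^ j / (j.factorial : ℝ))
    (Real.summable_pow_div_factorial |x|) (fun j => ?_)
  have hΓ := one_le_gamma n k j hk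
  have hf : (0:ℝ) < (j.factorial : ℝ) := by exact_mod_cast Nat.factorial_pos _
  rw [norm_div, norm_pow, Real.norm_eq_abs, Real.norm_eq_abs,
    abs_of_pos (by nlinarith : (0:ℝ) < (j.factorial : ℝ) * Real.Gamma ((n:ℝ) * (j:ℝ) + (k:ℝ))),
    ← div_div]
  exact div_le_self (by positivity) hΓ

lemma wright_nonneg (n k : ℕ) (hk : 1 ≤ k) (x : ℝ) (hx : 0 ≤ x) :
    0 ≤ wright (n:ℝ) (k:ℝ) x := by
  refine tsum_nonneg fun j => ?_
  have := gamma_pos n k j hk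
  have hf : (0:ℝ) < (j.factorial : ℝ) := by exact_mod_cast Nat.factorial_pos _
  positivity

lemma two_mul_fact_le (j : ℕ) : ((2*j).factorial : ℕ) ≤ 4 ^ j * (j.factorial * j.factorial) := by
  have h1 : (2*j).choose j * j.factorial * ((2*j) - j).factorial = (2*j).factorial :=
    Nat.choose_mul_factorial_mul_factorial (by omega)
  have h2 : (2*j).choose j ≤ 4 ^ j := by
    have := Nat.sum_range_choose (2*j)
    have hmem : j ∈ Finset.range (2*j+1) := by simp; omega
    have hle : (2*j).choose j ≤ ∑ m ∈ Finset.range (2*j+1), (2*j).choose m :=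
      Finset.single_le_sum (fun i _ => Nat.zero_le _) hmem
    calc (2*j).choose j ≤ 2 ^ (2*j) := by omega
      _ = 4 ^ j := by rw [pow_mul]; norm_num
  have h3 : (2*j) - j = j := by omega
  rw [h3] at h1
  calc (2*j).factorial = (2*j).choose j * j.factorial * j.factorial := h1.symm
    _ ≤ 4 ^ j * j.factorial * j.factorial := by
        exact Nat.mul_le_mul_right _ (Nat.mul_le_mul_right _ h2)
    _ = 4 ^ j * (j.factorial * j.factorial) := by ring

lemma exp_eq_tsum_real (y : ℝ) : Real.exp y = ∑' n : ℕ, y ^ n / (n.factorial : ℝ) := by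
  rw [Real.exp_eq_exp_ℝ, NormedSpace.exp_eq_tsum_div]

lemma wright_le_exp (n k : ℕ) (hn : 1 ≤ n) (hk : 1 ≤ k) (x : ℝ) (hx : 0 ≤ x) :
    wright (n:ℝ) (k:ℝ) x ≤ Real.exp (2 * Real.sqrt x) := by
  have hs2 : Summable (fun m : ℕ => (2 * Real.sqrt x) ^ m / (m.factorial : ℝ)) :=
    Real.summable_pow_div_factorial _
  have hinj : Function.Injective (fun j : ℕ => 2 * j) := fun a b h => by
    have : 2*a = 2*b := h
    omega
  have hs3 : Summable (fun j : ℕ => (2 * Real.sqrt x) ^ (2*j) / ((2*j).factorial : ℝ)) :=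
    hs2.comp_injective hinj
  have key : ∀ j : ℕ, x ^ j / ((j.factorial : ℝ) * Real.Gamma ((n:ℝ) * (j:ℝ) + (k:ℝ)))
      ≤ (2 * Real.sqrt x) ^ (2*j) / ((2*j).factorial : ℝ) := by
    intro j
    have hΓ := fact_le_gamma n k j hn hk
    have hΓ0 := gamma_pos n k j hk
    have hf : (0:ℝ) < (j.factorial : ℝ) := by exact_mod_cast Nat.factorial_pos _
    have hf2 : (0:ℝ) < ((2*j).factorial : ℝ) := by exact_mod_cast Nat.factorial_pos _
    have h2 : ((2*j).factorial : ℝ) ≤ 4 ^ j * ((j.factorial : ℝ) * (j.factorial : ℝ)) := by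
      exact_mod_cast two_mul_fact_le j
    have hnum : (2 * Real.sqrt x) ^ (2*j) = 4 ^ j * x ^ j := by
      rw [mul_pow, pow_mul, pow_mul, Real.sq_sqrt hx]
      norm_num
    rw [div_le_div_iff₀ (by positivity) hf2, hnum]
    have hxj : (0:ℝ) ≤ x ^ j := pow_nonneg hx j
    calc x ^ j * ((2*j).factorial : ℝ)
        ≤ x ^ j * (4 ^ j * ((j.factorial : ℝ) * (j.factorial : ℝ))) := by
          exact mul_le_mul_of_nonneg_left h2 hxj
      _ ≤ x ^ j * (4 ^ j * ((j.factorial : ℝ) * Real.Gamma ((n:ℝ) * (j:ℝ) + (k:ℝ)))) := by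
          gcongr
      _ = 4 ^ j * x ^ j * ((j.factorial : ℝ) * Real.Gamma ((n:ℝ) * (j:ℝ) + (k:ℝ))) := by ring
  calc wright (n:ℝ) (k:ℝ) x
      ≤ ∑' j : ℕ, (2 * Real.sqrt x) ^ (2*j) / ((2*j).factorial : ℝ) :=
        Summable.tsum_le_tsum key (wright_summable n k hk x) hs3
    _ ≤ ∑' m : ℕ, (2 * Real.sqrt x) ^ m / (m.factorial : ℝ) := by
        refine tsum_comp_le_tsum_of_inj hs2 (fun m => by positivity) hinj
    _ = Real.exp (2 * Real.sqrt x) := (exp_eq_tsum_real _).symm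

lemma measurable_wright_comp (n k : ℕ) (hk : 1 ≤ k) {g : ℝ → ℝ} (hg : Measurable g) :
    Measurable (fun s : ℝ => wright (n:ℝ) (k:ℝ) (g s)) := by
  apply measurable_of_tendsto_metrizable
    (f := fun N s => ∑ j ∈ Finset.range N,
      (g s) ^ j / ((j.factorial : ℝ) * Real.Gamma ((n:ℝ) * (j:ℝ) + (k:ℝ))))
  · intro N
    exact Finset.measurable_sum _ fun j _ => (hg.pow_const j).div_const _
  · rw [tendsto_pi_nhds]
    intro s
    exact ((wright_summable n k hk (g s)).hasSum).tendsto_sum_nat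

lemma integral_pow_exp {b : ℝ} (hb : 0 < b) (j : ℕ) :
    ∫ s in Ioi (0:ℝ), s ^ j * Real.exp (-(b*s)) = (j.factorial : ℝ) / b ^ (j+1) := by
  have h := Real.integral_rpow_mul_exp_neg_mul_Ioi (a := (j:ℝ)+1) (r := b) (by positivity) hb
  calc ∫ s in Ioi (0:ℝ), s ^ j * Real.exp (-(b*s))
      = ∫ t in Ioi (0:ℝ), t ^ ((j:ℝ)+1-1) * Real.exp (-(b*t)) := by
        refine (setIntegral_congr_fun measurableSet_Ioi (fun t ht => ?_)).symm
        rw [add_sub_cancel_right, Real.rpow_natCast]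
    _ = (1/b) ^ ((j:ℝ)+1) * Real.Gamma ((j:ℝ)+1) := h
    _ = (j.factorial : ℝ) / b ^ (j+1) := by
        rw [Real.Gamma_nat_eq_factorial,
          show ((j:ℝ)+1) = ((j+1:ℕ):ℝ) by push_cast; ring, Real.rpow_natCast]
        rw [one_div, inv_pow, inv_mul_eq_div]

lemma integrableOn_pow_exp {b : ℝ} (hb : 0 < b) (j : ℕ) :
    IntegrableOn (fun s : ℝ => s ^ j * Real.exp (-(b*s))) (Ioi 0) := by
  have h := integrableOn_rpow_mul_exp_neg_mul_rpow (p := 1) (s := (j:ℝ)) (b := b)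
    (lt_of_lt_of_le neg_one_lt_zero (Nat.cast_nonneg j)) one_pos hb
  exact h.congr_fun (fun x hx => by
    dsimp only; rw [Real.rpow_natCast, Real.rpow_one, neg_mul]) measurableSet_Ioi

lemma wright_laplace (lam c b : ℝ) (hlam : 0 < lam) (hc : 0 ≤ c) (hb : 0 < b)
    (n k : ℕ) (hn : 1 ≤ n) (hk : 1 ≤ k) :
    ∫ s in Ioi (0:ℝ), lam * Real.exp (-(b*s)) * wright (n:ℝ) (k:ℝ) (lam * s * c)
      = (lam / b) * ml2 (n:ℝ) (k:ℝ) (lam * c / b) := by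
  set F : ℕ → ℝ → ℝ := fun j s =>
    (lam * (lam*c)^j / ((j.factorial:ℝ) * Real.Gamma ((n:ℝ)*(j:ℝ)+(k:ℝ)))) *
      (s^j * Real.exp (-(b*s))) with hF
  have hFint : ∀ j, IntegrableOn (F j) (Ioi 0) := fun j => (integrableOn_pow_exp hb j).const_mul _
  have hFval : ∀ j, (∫ s in Ioi (0:ℝ), F j s)
      = (lam / b) * ((lam * c / b)^j / Real.Gamma ((n:ℝ)*(j:ℝ)+(k:ℝ))) := by
    intro j
    rw [hF]
    rw [integral_const_mul, integral_pow_exp hb j]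
    have hΓ := gamma_pos n k j hk
    have hfj : (0:ℝ) < (j.factorial:ℝ) := by exact_mod_cast Nat.factorial_pos _
    rw [div_pow, mul_pow]
    field_simp
    ring
  have hnorm : ∀ j, (∫ s in Ioi (0:ℝ), ‖F j s‖) = ∫ s in Ioi (0:ℝ), F j s := by
    intro j
    refine setIntegral_congr_fun measurableSet_Ioi (fun s hs => ?_)
    have hs0 : (0:ℝ) < s := hs
    have hΓ := gamma_pos n k j hk
    have hfj : (0:ℝ) < (j.factorial:ℝ) := by exact_mod_cast Nat.factorial_pos _
    have h0 : 0 ≤ F j s := by rw [hF]; positivity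
    exact norm_of_nonneg h0
  have hsum : Summable (fun j => ∫ s in Ioi (0:ℝ), ‖F j s‖) := by
    have hfun : (fun j => ∫ s in Ioi (0:ℝ), ‖F j s‖)
        = fun (j : ℕ) => (lam / b) * ((lam * c / b)^j / Real.Gamma ((n:ℝ)*(j:ℝ)+(k:ℝ))) :=
      funext fun j => (hnorm j).trans (hFval j)
    rw [hfun]
    refine Summable.of_nonneg_of_le (fun j => ?_) (fun j => ?_)
      (((Real.summable_pow_div_factorial (lam*c/b)).mul_left (lam/b)))
    · have hΓ := gamma_pos n k j hk
      positivity
    · have hΓ := fact_le_gamma n k j hn hk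
      have hfj : (0:ℝ) < (j.factorial:ℝ) := by exact_mod_cast Nat.factorial_pos _
      gcongr
  have heq : Set.EqOn (fun s => lam * Real.exp (-(b*s)) * wright (n:ℝ) (k:ℝ) (lam * s * c))
      (fun s => ∑' j, F j s) (Ioi 0) := by
    intro s _
    simp only [wright, ← tsum_mul_left]
    refine tsum_congr fun j => ?_
    rw [hF, show lam*s*c = (lam*c)*s by ring, mul_pow]
    ring
  calc ∫ s in Ioi (0:ℝ), lam * Real.exp (-(b*s)) * wright (n:ℝ) (k:ℝ) (lam * s * c)
      = ∫ s in Ioi (0:ℝ), ∑' j, F j s := setIntegral_congr_fun measurableSet_Ioi heq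
    _ = ∑' j, ∫ s in Ioi (0:ℝ), F j s :=
        (integral_tsum_of_summable_integral_norm hFint hsum).symm
    _ = ∑' (j : ℕ), (lam / b) * ((lam * c / b)^j / Real.Gamma ((n:ℝ)*(j:ℝ)+(k:ℝ))) :=
        tsum_congr hFval
    _ = (lam / b) * ml2 (n:ℝ) (k:ℝ) (lam * c / b) := by rw [tsum_mul_left, ml2]

lemma wright_integrableOn (lam c b : ℝ) (hlam : 0 < lam) (hc : 0 ≤ c) (hb : 0 < b)
    (n k : ℕ) (hn : 1 ≤ n) (hk : 1 ≤ k) :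
    IntegrableOn (fun s : ℝ => lam * Real.exp (-(b*s)) * wright (n:ℝ) (k:ℝ) (lam * s * c))
      (Ioi 0) := by
  have hmeas : Measurable fun s : ℝ =>
      lam * Real.exp (-(b*s)) * wright (n:ℝ) (k:ℝ) (lam*s*c) := by
    apply Measurable.mul
    · fun_prop
    · exact measurable_wright_comp n k hk (by fun_prop)
  refine Integrable.mono'
    (g := fun s => (lam * Real.exp (2*lam*c/b)) * Real.exp (-(b/2) * s))
    ((exp_neg_integrableOn_Ioi 0 (by positivity : (0:ℝ) < b/2)).const_mul _)
    hmeas.aestronglyMeasurable.restrict ?_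
  rw [ae_restrict_iff' measurableSet_Ioi]
  filter_upwards with s hs
  have hs0 : (0:ℝ) < s := hs
  have hx : 0 ≤ lam*s*c := by positivity
  have h0 : 0 ≤ wright (n:ℝ) (k:ℝ) (lam*s*c) := wright_nonneg n k hk _ hx
  have hamgm : 2 * Real.sqrt (lam*s*c) ≤ 2*lam*c/b + (b/2)*s := by
    have h1 : lam*s*c = (2*lam*c/b) * ((b/2)*s) := by field_simp
    have hu : 0 ≤ 2*lam*c/b := by positivity
    have hv : 0 ≤ (b/2)*s := by positivity
    have h2 : Real.sqrt ((2*lam*c/b) * ((b/2)*s)) ≤ (2*lam*c/b + (b/2)*s)/2 := by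
      calc Real.sqrt ((2*lam*c/b) * ((b/2)*s))
          ≤ Real.sqrt (((2*lam*c/b + (b/2)*s)/2)^2) := Real.sqrt_le_sqrt (by nlinarith [sq_nonneg (2*lam*c/b - (b/2)*s)])
        _ = (2*lam*c/b + (b/2)*s)/2 := Real.sqrt_sq (by positivity)
    rw [h1]
    linarith
  rw [norm_of_nonneg (mul_nonneg (by positivity) h0)]
  calc lam * Real.exp (-(b*s)) * wright (n:ℝ) (k:ℝ) (lam*s*c)
      ≤ lam * Real.exp (-(b*s)) * Real.exp (2 * Real.sqrt (lam*s*c)) :=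
        mul_le_mul_of_nonneg_left (wright_le_exp n k hn hk _ hx) (by positivity)
    _ ≤ (lam * Real.exp (2*lam*c/b)) * Real.exp (-(b/2) * s) := by
        have hee : Real.exp (-(b*s)) * Real.exp (2 * Real.sqrt (lam*s*c))
            ≤ Real.exp (2*lam*c/b) * Real.exp (-(b/2) * s) := by
          rw [← Real.exp_add, ← Real.exp_add]
          exact Real.exp_le_exp.mpr (by linarith)
        calc lam * Real.exp (-(b*s)) * Real.exp (2 * Real.sqrt (lam*s*c))
            = lam * (Real.exp (-(b*s)) * Real.exp (2 * Real.sqrt (lam*s*c))) := by ring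
          _ ≤ lam * (Real.exp (2*lam*c/b) * Real.exp (-(b/2) * s)) :=
              mul_le_mul_of_nonneg_left hee hlam.le
          _ = (lam * Real.exp (2*lam*c/b)) * Real.exp (-(b/2) * s) := by ring

end Aux

open Set in
/-- Laplace transform of the inverse compound Poisson–Erlang
process `Y^{(n)}(t)`. -/
theorem stmt15 (lam β t : ℝ) (hlam : 0 < lam) (hβ : 0 < β) (ht : 0 ≤ t)
    (n : ℕ) (hn : 1 ≤ n) (v : ℝ) (hv : -lam < v) :
    (∫ s in Set.Ioi (0 : ℝ),
      Real.exp (-(v * s)) *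
        (lam * Real.exp (-(β * t) - lam * s) *
          ∑ k ∈ Finset.Icc 1 n,
            (β * t) ^ (k - 1) * wright (n : ℝ) (k : ℝ) (lam * s * (β * t) ^ n)))
    = Real.exp (-(β * t)) * (lam / (lam + v)) *
        ∑ k ∈ Finset.Icc 1 n,
          (β * t) ^ (k - 1) * ml2 (n : ℝ) (k : ℝ) (lam * (β * t) ^ n / (lam + v)) := by
  have hm : 0 < lam + v := by linarith
  have hc : 0 ≤ (β*t)^n := by positivity
  have hrw : ∀ s : ℝ,
      Real.exp (-(v * s)) * (lam * Real.exp (-(β * t) - lam * s) *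
        ∑ k ∈ Finset.Icc 1 n, (β * t) ^ (k - 1) * wright (n:ℝ) (k:ℝ) (lam * s * (β * t) ^ n))
      = Real.exp (-(β * t)) * ∑ k ∈ Finset.Icc 1 n,
          (β * t) ^ (k - 1) *
            (lam * Real.exp (-((lam + v) * s)) * wright (n:ℝ) (k:ℝ) (lam * s * (β * t) ^ n)) := by
    intro s
    have hexp : Real.exp (-(v * s)) * Real.exp (-(β * t) - lam * s)
        = Real.exp (-(β * t)) * Real.exp (-((lam + v) * s)) := by
      rw [← Real.exp_add, ← Real.exp_add]; congr 1; ring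
    simp only [Finset.mul_sum]
    refine Finset.sum_congr rfl fun k _ => ?_
    linear_combination ((β * t) ^ (k - 1) * wright (n:ℝ) (k:ℝ) (lam * s * (β * t) ^ n) * lam) * hexp
  simp only [hrw]
  rw [MeasureTheory.integral_const_mul,
    MeasureTheory.integral_finset_sum _ (fun k hk =>
      ((wright_integrableOn lam ((β*t)^n) (lam+v) hlam hc hm n k hn
        (Finset.mem_Icc.mp hk).1).const_mul _))]
  have hterm : ∀ k ∈ Finset.Icc 1 n,
      (∫ s in Ioi (0:ℝ), (β*t)^(k-1) *
        (lam * Real.exp (-((lam+v)*s)) * wright (n:ℝ) (k:ℝ) (lam*s*(β*t)^n)))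
      = (β*t)^(k-1) * ((lam/(lam+v)) * ml2 (n:ℝ) (k:ℝ) (lam*(β*t)^n/(lam+v))) := by
    intro k hk
    rw [MeasureTheory.integral_const_mul,
      wright_laplace lam ((β*t)^n) (lam+v) hlam hc hm n k hn (Finset.mem_Icc.mp hk).1]
  rw [Finset.sum_congr rfl hterm]
  rw [mul_assoc]
  simp only [Finset.mul_sum]
  exact Finset.sum_congr rfl fun k _ => by ring
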